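/- Let T(λ) = -B_0 + λI + B_1/(λ - α_1) + ... + B_m/(λ - α_m) with n×n complex matrices B_i and distinct complex numbers α_i. If λ_0 is an eigenvalue of T(λ), then |λ_0| ≤ ‖E‖ + max{|α_1|, ..., |α_m|}, where E is the block matrix with first m block rows all zero except last block column equal to -I, and last block row (B_1, ..., B_m, B_0), and ‖·‖ is any matrix norm induced by an absolute norm on ℂ^{(m+1)n}. -/

import Mathlib

section auxnu
set_option linter.unusedSectionVars false
variable {ι : Type*} [Fintype ι] [DecidableEq ι]
variable (ν : (ι → ℂ) → ℝ)
variable (hν_pos : ∀ x, x ≠ 0 → 0 < ν x) (hν_zero : ν 0 = 0)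
variable (hν_add : ∀ x y, ν (x + y) ≤ ν x + ν y)
variable (hν_smul : ∀ (c : ℂ) x, ν (c • x) = ‖c‖ * ν x)
variable (hν_abs : ∀ x y, (∀ i, ‖x i‖ = ‖y i‖) → ν x = ν y)

include hν_add hν_smul hν_abs in
lemma nu_step (x y : ι → ℂ) (k : ι) (hk : ∀ j, j ≠ k → x j = y j)
    (hxy : ‖x k‖ ≤ ‖y k‖) : ν x ≤ ν y := by
  by_cases hy : y k = 0
  · have hx : x k = 0 := by
      have := hxy
      rw [hy, norm_zero] at this
      exact norm_eq_zero.mp (le_antisymm this (norm_nonneg _))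
    have : x = y := by
      funext j
      by_cases hj : j = k
      · rw [hj, hx, hy]
      · exact hk j hj
    rw [this]
  · set t : ℝ := ‖x k‖ / ‖y k‖ with ht
    have hyk : 0 < ‖y k‖ := norm_pos_iff.mpr hy
    have ht0 : 0 ≤ t := div_nonneg (norm_nonneg _) hyk.le
    have ht1 : t ≤ 1 := (div_le_one hyk).mpr hxy
    set x' : ι → ℂ := Function.update y k ((t : ℂ) * y k) with hx'
    have habs_xx' : ν x = ν x' := by
      apply hν_abs
      intro i
      by_cases hi : i = k
      · subst hi
        simp only [hx', Function.update_self, norm_mul, Complex.norm_real, Real.norm_eq_abs,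
          abs_of_nonneg ht0, ht]
        rw [abs_of_nonneg (div_nonneg (norm_nonneg _) hyk.le)]
        field_simp
      · simp only [hx', Function.update_of_ne hi, hk i hi]
    set yt : ι → ℂ := Function.update y k (-(y k)) with hyt
    have habs_yyt : ν yt = ν y := by
      apply hν_abs
      intro i
      by_cases hi : i = k
      · subst hi; simp [hyt]
      · simp [hyt, Function.update_of_ne hi]
    have hdecomp : x' = (((1+t)/2 : ℝ) : ℂ) • y + (((1-t)/2 : ℝ) : ℂ) • yt := by
      funext j
      by_cases hj : j = k
      · subst hj
        simp only [hx', hyt, Function.update_self, Pi.add_apply, Pi.smul_apply,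
          smul_eq_mul]
        push_cast
        ring
      · simp only [hx', hyt, Function.update_of_ne hj, Pi.add_apply, Pi.smul_apply,
          smul_eq_mul]
        push_cast
        ring
    calc ν x = ν x' := habs_xx'
      _ ≤ ν ((((1+t)/2 : ℝ) : ℂ) • y) + ν ((((1-t)/2 : ℝ) : ℂ) • yt) := by
          rw [hdecomp]; exact hν_add _ _
      _ = (1+t)/2 * ν y + (1-t)/2 * ν yt := by
          rw [hν_smul, hν_smul, Complex.norm_real, Real.norm_eq_abs, Complex.norm_real, Real.norm_eq_abs,
            abs_of_nonneg (by linarith), abs_of_nonneg (by linarith)]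
      _ = ν y := by rw [habs_yyt]; ring

include hν_add hν_smul hν_abs in
lemma nu_mono (x y : ι → ℂ) (h : ∀ i, ‖x i‖ ≤ ‖y i‖) :
    ν x ≤ ν y := by
  have key : ∀ s : Finset ι, ν (fun i => if i ∈ s then x i else y i) ≤ ν y := by
    intro s
    induction s using Finset.induction with
    | empty => simp
    | @insert a s ha ih =>
      refine le_trans ?_ ih
      apply nu_step ν hν_add hν_smul hν_abs _ _ a
      · intro j hj
        simp [Finset.mem_insert, hj]
      · simp only [Finset.mem_insert_self, if_pos, ha, if_neg]
        exact h a
  have := key Finset.univ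
  simpa using this

include hν_add in
lemma nu_sum (hν_zero : ν 0 = 0) {κ : Type*} (f : κ → (ι → ℂ)) (s : Finset κ) :
    ν (∑ k ∈ s, f k) ≤ ∑ k ∈ s, ν (f k) := by
  classical
  induction s using Finset.induction with
  | empty => simp [hν_zero]
  | @insert a s ha ih =>
    rw [Finset.sum_insert ha, Finset.sum_insert ha]
    exact le_trans (hν_add _ _) (by linarith)

include hν_pos in
lemma nu_single_pos (j : ι) : 0 < ν (Pi.single j (1:ℂ)) := by
  apply hν_pos
  intro h
  have := congrFun h j
  simp at this

include hν_pos hν_add hν_smul hν_abs in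
lemma nu_coord_le (x : ι → ℂ) (j : ι) :
    ‖x j‖ * ν (Pi.single j (1:ℂ)) ≤ ν x := by
  have h1 : ‖x j‖ * ν (Pi.single j (1:ℂ)) =
      ν (x j • (Pi.single j (1:ℂ) : ι → ℂ)) := (hν_smul _ _).symm
  rw [h1]
  apply nu_mono ν hν_add hν_smul hν_abs
  intro i
  by_cases hi : i = j
  · subst hi; simp
  · simp [Pi.single_apply, hi, norm_nonneg]

include hν_pos hν_zero hν_add hν_smul hν_abs in
lemma nu_opnorm (M : Matrix ι ι ℂ) (x : ι → ℂ) :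
    ν (M.mulVec x) ≤ sSup {r : ℝ | ∃ x, ν x = 1 ∧ r = ν (M.mulVec x)} * ν x := by
  set S := {r : ℝ | ∃ x, ν x = 1 ∧ r = ν (M.mulVec x)} with hS
  have hbdd : BddAbove S := by
    refine ⟨∑ k, (∑ j, ‖M k j‖ * (ν (Pi.single j (1:ℂ)))⁻¹) *
      ν (Pi.single k (1:ℂ)), ?_⟩
    rintro r ⟨z, hz1, rfl⟩
    have hz_coord : ∀ j, ‖z j‖ ≤ (ν (Pi.single j (1:ℂ)))⁻¹ := by
      intro j
      have h := nu_coord_le ν hν_pos hν_add hν_smul hν_abs z j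
      rw [hz1] at h
      rw [inv_eq_one_div, le_div_iff₀ (nu_single_pos ν hν_pos j)]
      exact h
    have hsingle : M.mulVec z = ∑ k, ((M.mulVec z) k • (Pi.single k (1:ℂ) : ι → ℂ)) := by
      funext i
      simp [Pi.single_apply, Finset.sum_ite_eq]
    calc ν (M.mulVec z)
        = ν (∑ k, ((M.mulVec z) k • (Pi.single k (1:ℂ) : ι → ℂ))) := congrArg ν hsingle
      _ ≤ ∑ k, ν ((M.mulVec z) k • (Pi.single k (1:ℂ) : ι → ℂ)) :=
          nu_sum ν hν_add hν_zero _ _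
      _ = ∑ k, ‖(M.mulVec z) k‖ * ν (Pi.single k (1:ℂ)) := by
          simp [hν_smul]
      _ ≤ ∑ k, (∑ j, ‖M k j‖ * (ν (Pi.single j (1:ℂ)))⁻¹) *
            ν (Pi.single k (1:ℂ)) := by
          apply Finset.sum_le_sum
          intro k _
          apply mul_le_mul_of_nonneg_right _ (nu_single_pos ν hν_pos k).le
          calc ‖(M.mulVec z) k‖
              ≤ ∑ j, ‖M k j * z j‖ := by
                simpa [Matrix.mulVec, dotProduct] using
                  norm_sum_le Finset.univ (fun j => M k j * z j)
            _ ≤ ∑ j, ‖M k j‖ * (ν (Pi.single j (1:ℂ)))⁻¹ := by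
                apply Finset.sum_le_sum
                intro j _
                rw [norm_mul]
                exact mul_le_mul_of_nonneg_left (hz_coord j) (norm_nonneg _)
  by_cases hx : x = 0
  · subst hx
    simp [hν_zero, Matrix.mulVec_zero]
  · have ht : 0 < ν x := hν_pos x hx
    set z := (((ν x)⁻¹ : ℝ) : ℂ) • x with hz
    have hz1 : ν z = 1 := by
      rw [hz, hν_smul, Complex.norm_real, Real.norm_eq_abs, abs_of_nonneg (inv_nonneg.mpr ht.le)]
      field_simp
    have hmem : ν (M.mulVec z) ∈ S := ⟨z, hz1, rfl⟩
    have hle : ν (M.mulVec z) ≤ sSup S := le_csSup hbdd hmem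
    have hMz : M.mulVec z = (((ν x)⁻¹ : ℝ) : ℂ) • M.mulVec x := by
      rw [hz, Matrix.mulVec_smul]
    rw [hMz, hν_smul, Complex.norm_real, Real.norm_eq_abs, abs_of_nonneg (inv_nonneg.mpr ht.le)] at hle
    calc ν (M.mulVec x) = ν x * ((ν x)⁻¹ * ν (M.mulVec x)) := by field_simp
      _ ≤ ν x * sSup S := mul_le_mul_of_nonneg_left hle ht.le
      _ = sSup S * ν x := mul_comm _ _

include hν_pos hν_zero in
lemma nu_nonneg (x : ι → ℂ) : 0 ≤ ν x := by
  rcases eq_or_ne x 0 with h | h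
  · rw [h, hν_zero]
  · exact (hν_pos x h).le

end auxnu

/-- The `(m+1)n × (m+1)n` block matrix `E` whose first `m` block rows are zero except for
a `-I` in the last block column, and whose last block row is `(B₁, …, Bₘ, B₀)`. -/
def blockE (m n : ℕ) (B0 : Matrix (Fin n) (Fin n) ℂ) (B : Fin m → Matrix (Fin n) (Fin n) ℂ) :
    Matrix ((Fin m × Fin n) ⊕ Fin n) ((Fin m × Fin n) ⊕ Fin n) ℂ
  | Sum.inl _, Sum.inl _ => 0
  | Sum.inl (_, r), Sum.inr s => -(if r = s then 1 else 0)
  | Sum.inr r, Sum.inl (j, s) => B j r s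
  | Sum.inr r, Sum.inr s => B0 r s

/-- If `λ₀` is an eigenvalue of `T(λ) = -B₀ + λI + Σ Bᵢ/(λ - αᵢ)`, then
`|λ₀| ≤ ‖E‖ + max_i |αᵢ|`, where `‖·‖` is the matrix norm induced by any absolute norm
`ν` on `ℂ^{(m+1)n}` (a norm depending only on the absolute values of the entries). -/
theorem stmt_8 (m n : ℕ) (hm : 0 < m) (B0 : Matrix (Fin n) (Fin n) ℂ)
    (B : Fin m → Matrix (Fin n) (Fin n) ℂ)
    (α : Fin m → ℂ) (hα : Function.Injective α)
    -- ν is an absolute norm on ℂ^{(m+1)n}: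
    (ν : ((Fin m × Fin n) ⊕ Fin n → ℂ) → ℝ)
    (hν_pos : ∀ x, x ≠ 0 → 0 < ν x) (hν_zero : ν 0 = 0)
    (hν_add : ∀ x y, ν (x + y) ≤ ν x + ν y)
    (hν_smul : ∀ (c : ℂ) x, ν (c • x) = ‖c‖ * ν x)
    (hν_abs : ∀ x y, (∀ i, ‖x i‖ = ‖y i‖) → ν x = ν y)
    -- N is the matrix norm induced by ν:
    (N : Matrix ((Fin m × Fin n) ⊕ Fin n) ((Fin m × Fin n) ⊕ Fin n) ℂ → ℝ)
    (hN : ∀ M, N M = sSup {r : ℝ | ∃ x, ν x = 1 ∧ r = ν (M.mulVec x)})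
    (lam0 : ℂ) (hpole : ∀ i, lam0 ≠ α i) (v : Fin n → ℂ) (hv : v ≠ 0)
    (heig : (-B0 + lam0 • (1 : Matrix (Fin n) (Fin n) ℂ) +
        ∑ i, (lam0 - α i)⁻¹ • B i).mulVec v = 0) :
    ‖lam0‖ ≤ N (blockE m n B0 B) +
      Finset.univ.sup' (Finset.univ_nonempty_iff.mpr (Fin.pos_iff_nonempty.mp hm))
        (fun i => ‖α i‖) := by
  by_contra hcon
  push_neg at hcon
  set maxA := Finset.univ.sup' (Finset.univ_nonempty_iff.mpr (Fin.pos_iff_nonempty.mp hm))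
    (fun i => ‖α i‖) with hmaxA
  set E := blockE m n B0 B with hE
  -- the eigenvector of the companion matrix
  set w : (Fin m × Fin n) ⊕ Fin n → ℂ :=
    Sum.elim (fun p => -((lam0 - α p.1)⁻¹ * v p.2)) v with hw
  set a : (Fin m × Fin n) ⊕ Fin n → ℂ :=
    Sum.elim (fun p => α p.1) (fun _ => (0:ℂ)) with ha
  have hsub : ∀ i, lam0 - α i ≠ 0 := fun i => sub_ne_zero.mpr (hpole i)
  -- key componentwise identity
  have hEw : ∀ k, E.mulVec w k = (lam0 - a k) * w k := by
    intro k
    match k with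
    | Sum.inl (i, r) =>
      have hLHS : E.mulVec w (Sum.inl (i, r)) = -v r := by
        simp [hE, hw, Matrix.mulVec, dotProduct, Fintype.sum_sum_type, blockE,
          ite_mul, Finset.sum_ite_eq]
      rw [hLHS]
      simp only [ha, hw, Sum.elim_inl]
      field_simp
      rw [mul_div_assoc, div_self (hsub i), mul_one]
    | Sum.inr r =>
      have hco := congrFun heig r
      simp only [Matrix.mulVec, dotProduct, Matrix.add_apply, Matrix.neg_apply,
        Matrix.smul_apply, Matrix.one_apply, Matrix.sum_apply, Pi.zero_apply,
        smul_eq_mul] at hco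
      have hLHS : E.mulVec w (Sum.inr r) =
          ∑ p : Fin m × Fin n, B p.1 r p.2 * (-((lam0 - α p.1)⁻¹ * v p.2))
            + ∑ s, B0 r s * v s := by
        simp [hE, hw, Matrix.mulVec, dotProduct, Fintype.sum_sum_type, blockE]
      rw [hLHS]
      simp only [ha, hw, Sum.elim_inr]
      rw [Fintype.sum_prod_type]
      have h1 : ∀ x : Fin m, ∑ y, B x r y * -((lam0 - α x)⁻¹ * v y)
          = -((lam0 - α x)⁻¹ * ∑ y, B x r y * v y) := by
        intro x
        rw [Finset.mul_sum, ← Finset.sum_neg_distrib]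
        apply Finset.sum_congr rfl
        intros; ring
      rw [Finset.sum_congr rfl (fun x _ => h1 x)]
      have hco2 : -(∑ s, B0 r s * v s) + lam0 * v r
          + ∑ j, (lam0 - α j)⁻¹ * ∑ s, B j r s * v s = 0 := by
        rw [← hco]
        simp only [add_mul, Finset.sum_add_distrib, neg_mul, Finset.sum_neg_distrib,
          ite_mul, one_mul, mul_ite, mul_one, mul_zero, Finset.sum_ite_eq,
          Finset.mem_univ, if_true, Finset.sum_mul, zero_mul]
        rw [Finset.sum_comm]
        congr 1
        apply Finset.sum_congr rfl
        intro j _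
        rw [Finset.mul_sum]
        apply Finset.sum_congr rfl
        intros; ring
      rw [Finset.sum_neg_distrib]
      linear_combination -hco2
  -- w is nonzero
  obtain ⟨r0, hr0⟩ := Function.ne_iff.mp hv
  have hwne : w ≠ 0 := by
    intro h
    have := congrFun h (Sum.inr r0)
    simp only [hw, Sum.elim_inr, Pi.zero_apply] at this
    exact hr0 this
  have hνw : 0 < ν w := hν_pos w hwne
  have hmax0 : 0 ≤ maxA := by
    rw [hmaxA]
    obtain ⟨i0⟩ := Fin.pos_iff_nonempty.mp hm
    exact le_trans (norm_nonneg (α i0)) (Finset.le_sup' (fun i => ‖α i‖) (Finset.mem_univ i0))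
  set δ := ‖lam0‖ - maxA with hδ
  have hNEδ : N E < δ := by rw [hδ]; linarith
  have hkey := nu_opnorm ν hν_pos hν_zero hν_add hν_smul hν_abs E w
  rw [← hN E] at hkey
  have hNE0 : 0 ≤ N E := by
    have h0 : 0 ≤ ν (E.mulVec w) := nu_nonneg ν hν_pos hν_zero _
    nlinarith
  have hδpos : 0 < δ := lt_of_le_of_lt hNE0 hNEδ
  have hδk : ∀ k, δ ≤ ‖lam0 - a k‖ := by
    intro k
    match k with
    | Sum.inl (i, r) =>
      simp only [ha, Sum.elim_inl]
      have h1 : ‖α i‖ ≤ maxA := by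
        rw [hmaxA]; exact Finset.le_sup' (fun i => ‖α i‖) (Finset.mem_univ i)
      have h2 : ‖lam0‖ ≤ ‖lam0 - α i‖ + ‖α i‖ := by
        calc ‖lam0‖ = ‖(lam0 - α i) + α i‖ := by rw [sub_add_cancel]
          _ ≤ ‖lam0 - α i‖ + ‖α i‖ := norm_add_le _ _
      linarith
    | Sum.inr r =>
      simp only [ha, Sum.elim_inr, sub_zero]
      linarith
  have hmono : ν w ≤ ν ((((δ⁻¹ : ℝ)) : ℂ) • E.mulVec w) := by
    apply nu_mono ν hν_add hν_smul hν_abs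
    intro k
    simp only [Pi.smul_apply, smul_eq_mul, norm_mul, Complex.norm_real, Real.norm_eq_abs,
      abs_of_nonneg (inv_nonneg.mpr hδpos.le)]
    rw [hEw k, norm_mul]
    have h1 : 1 ≤ δ⁻¹ * ‖lam0 - a k‖ := by
      rw [inv_mul_eq_div, le_div_iff₀ hδpos, one_mul]
      exact hδk k
    calc ‖w k‖ = 1 * ‖w k‖ := (one_mul _).symm
      _ ≤ (δ⁻¹ * ‖lam0 - a k‖) * ‖w k‖ :=
          mul_le_mul_of_nonneg_right h1 (norm_nonneg _)
      _ = δ⁻¹ * (‖lam0 - a k‖ * ‖w k‖) := by ring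
  rw [hν_smul, Complex.norm_real, Real.norm_eq_abs, abs_of_nonneg (inv_nonneg.mpr hδpos.le)] at hmono
  have hchain : ν w ≤ δ⁻¹ * (N E * ν w) :=
    le_trans hmono (mul_le_mul_of_nonneg_left hkey (inv_nonneg.mpr hδpos.le))
  have hlt : δ⁻¹ * (N E * ν w) < ν w := by
    have h2 : N E * ν w < δ * ν w := mul_lt_mul_of_pos_right hNEδ hνw
    calc δ⁻¹ * (N E * ν w) < δ⁻¹ * (δ * ν w) :=
          mul_lt_mul_of_pos_left h2 (inv_pos.mpr hδpos)
      _ = ν w := by field_simp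
  linarith
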